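/- There exists δ0 ∈ (0,1) such that for every δ ∈ (0, δ0] there exists n0 ∈ ℕ with the following property. Let n ≥ n0 and let k be a positive integer with (k−1)² + k + 1 ≤ n ≤ k² + k + 1. Let H be an n-vertex linear hypergraph in which every edge e satisfies |e| ≥ (1−δ)√n, let e, f ∈ E(H) be distinct intersecting edges of size at most k, let w ∈ e ∩ f, and let m be the number of edges of H of size at most k−1 containing w. If at least one of e or f has size at most k−1, or if m ≤ 1/(3δ), then {e, f} is a useful pair. -/

import Mathlib

open Finset
open scoped Classical

/-- A hypergraph on vertex set `Fin n` is *linear* if any two distinct edges intersect in at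
most one vertex. -/
def LinearHG {n : ℕ} (H : Finset (Finset (Fin n))) : Prop :=
  ∀ e ∈ H, ∀ f ∈ H, e ≠ f → (e ∩ f).card ≤ 1

/-- The set `N(e) ∩ N(f)` of edges of `H` intersecting both `e` and `f` (other than `e`, `f`
themselves). -/
def CommonNbrs {n : ℕ} (H : Finset (Finset (Fin n))) (e f : Finset (Fin n)) :
    Finset (Finset (Fin n)) :=
  H.filter fun g => g ≠ e ∧ (g ∩ e).Nonempty ∧ g ≠ f ∧ (g ∩ f).Nonempty

/-- A pair of edges `{e, f}` of an `n`-vertex hypergraph is *useful* if `e ≠ f`,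
`e ∩ f ≠ ∅`, and `|N(e) ∩ N(f)| ≤ n - 2`. -/
def Useful {n : ℕ} (H : Finset (Finset (Fin n))) (e f : Finset (Fin n)) : Prop :=
  e ≠ f ∧ (e ∩ f).Nonempty ∧ ((CommonNbrs H e f).card : ℤ) ≤ (n : ℤ) - 2

/-- the sets g \ {w} for edges g through w are pairwise disjoint, so sizes sum to ≤ n-1 -/
lemma aux_sum {n : ℕ} {H : Finset (Finset (Fin n))} (hlin : LinearHG H) (w : Fin n) :
    ∑ g ∈ H.filter (fun g => w ∈ g), ((g.card : ℝ) - 1) ≤ (n : ℝ) - 1 := by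
  classical
  set D := H.filter (fun g => w ∈ g) with hD
  have hmem : ∀ g ∈ D, g ∈ H ∧ w ∈ g := fun g hg => Finset.mem_filter.mp hg
  have hdisj : ∀ g ∈ D, ∀ g' ∈ D, g ≠ g' → Disjoint (g.erase w) (g'.erase w) := by
    intro g hg g' hg' hne
    obtain ⟨hgH, hwg⟩ := hmem g hg
    obtain ⟨hgH', hwg'⟩ := hmem g' hg'
    have hcap : (g ∩ g').card ≤ 1 := hlin g hgH g' hgH' hne
    rw [Finset.disjoint_left]
    intro x hx hx'
    have hxg : x ∈ g := Finset.mem_of_mem_erase hx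
    have hxg' : x ∈ g' := Finset.mem_of_mem_erase hx'
    have hxw : x ≠ w := Finset.ne_of_mem_erase hx
    have : x = w := Finset.card_le_one.mp hcap x (Finset.mem_inter.mpr ⟨hxg, hxg'⟩)
      w (Finset.mem_inter.mpr ⟨hwg, hwg'⟩)
    exact hxw this
  have hcard : ∑ g ∈ D, (g.erase w).card = (D.biUnion (fun g => g.erase w)).card :=
    (Finset.card_biUnion hdisj).symm
  have hsub : D.biUnion (fun g => g.erase w) ⊆ Finset.univ.erase w := by
    intro x hx
    obtain ⟨g, _, hxg⟩ := Finset.mem_biUnion.mp hx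
    exact Finset.mem_erase.mpr ⟨Finset.ne_of_mem_erase hxg, Finset.mem_univ x⟩
  have h1 : ∑ g ∈ D, (g.erase w).card ≤ n - 1 := by
    rw [hcard]
    calc (D.biUnion (fun g => g.erase w)).card ≤ (Finset.univ.erase w).card :=
          Finset.card_le_card hsub
      _ = n - 1 := by
          rw [Finset.card_erase_of_mem (Finset.mem_univ w), Finset.card_univ, Fintype.card_fin]
  have hn1 : 1 ≤ n := w.pos
  have heq : ∑ g ∈ D, ((g.card : ℝ) - 1) = ((∑ g ∈ D, (g.erase w).card : ℕ) : ℝ) := by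
    push_cast
    refine Finset.sum_congr rfl fun g hg => ?_
    have hwg : w ∈ g := (hmem g hg).2
    have h1g : 1 ≤ g.card := Finset.card_pos.mpr ⟨w, hwg⟩
    rw [Finset.card_erase_of_mem hwg]
    push_cast [h1g]
    ring
  rw [heq]
  calc ((∑ g ∈ D, (g.erase w).card : ℕ) : ℝ) ≤ ((n - 1 : ℕ) : ℝ) := by exact_mod_cast h1
    _ = (n : ℝ) - 1 := by push_cast [hn1]; ring

/-- common neighbours avoiding w inject into pairs from (e\w) × (f\w) -/
lemma aux_Q {n : ℕ} {H : Finset (Finset (Fin n))} (hlin : LinearHG H)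
    {e f : Finset (Fin n)} {w : Fin n} (hwef : e ∩ f = {w}) :
    ((CommonNbrs H e f).filter (fun g => w ∉ g)).card ≤
      (e.erase w).card * (f.erase w).card := by
  classical
  have hsub : (CommonNbrs H e f).filter (fun g => w ∉ g) ⊆
      ((e.erase w) ×ˢ (f.erase w)).biUnion
        (fun p => H.filter fun g => p.1 ∈ g ∧ p.2 ∈ g) := by
    intro g hg
    obtain ⟨hg', hwg⟩ := Finset.mem_filter.mp hg
    obtain ⟨hgH, hne, hge, hnf, hgf⟩ := Finset.mem_filter.mp hg'
    obtain ⟨x, hx⟩ := hge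
    obtain ⟨y, hy⟩ := hgf
    have hxg : x ∈ g := (Finset.mem_inter.mp hx).1
    have hxe : x ∈ e := (Finset.mem_inter.mp hx).2
    have hyg : y ∈ g := (Finset.mem_inter.mp hy).1
    have hyf : y ∈ f := (Finset.mem_inter.mp hy).2
    have hxw : x ≠ w := fun h => hwg (h ▸ hxg)
    have hyw : y ≠ w := fun h => hwg (h ▸ hyg)
    refine Finset.mem_biUnion.mpr ⟨(x, y), ?_, ?_⟩
    · exact Finset.mem_product.mpr ⟨Finset.mem_erase.mpr ⟨hxw, hxe⟩,
        Finset.mem_erase.mpr ⟨hyw, hyf⟩⟩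
    · exact Finset.mem_filter.mpr ⟨hgH, hxg, hyg⟩
  calc ((CommonNbrs H e f).filter (fun g => w ∉ g)).card
      ≤ (((e.erase w) ×ˢ (f.erase w)).biUnion
          (fun p => H.filter fun g => p.1 ∈ g ∧ p.2 ∈ g)).card :=
        Finset.card_le_card hsub
    _ ≤ ∑ p ∈ (e.erase w) ×ˢ (f.erase w), (H.filter fun g => p.1 ∈ g ∧ p.2 ∈ g).card :=
        Finset.card_biUnion_le
    _ ≤ ∑ _p ∈ (e.erase w) ×ˢ (f.erase w), 1 := by
        refine Finset.sum_le_sum fun p hp => ?_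
        obtain ⟨hp1, hp2⟩ := Finset.mem_product.mp hp
        have hp1w : p.1 ≠ w := Finset.ne_of_mem_erase hp1
        have hp1e : p.1 ∈ e := Finset.mem_of_mem_erase hp1
        have hp2f : p.2 ∈ f := Finset.mem_of_mem_erase hp2
        have hpne : p.1 ≠ p.2 := by
          intro h
          have : p.1 ∈ e ∩ f := Finset.mem_inter.mpr ⟨hp1e, h ▸ hp2f⟩
          rw [hwef, Finset.mem_singleton] at this
          exact hp1w this
        refine Finset.card_le_one.mpr fun a ha b hb => ?_
        obtain ⟨haH, ha1, ha2⟩ := Finset.mem_filter.mp ha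
        obtain ⟨hbH, hb1, hb2⟩ := Finset.mem_filter.mp hb
        by_contra hab
        have hcap : (a ∩ b).card ≤ 1 := hlin a haH b hbH hab
        have h2 : ({p.1, p.2} : Finset (Fin n)) ⊆ a ∩ b := by
          intro x hx
          rcases Finset.mem_insert.mp hx with h | h
          · exact h ▸ Finset.mem_inter.mpr ⟨ha1, hb1⟩
          · rw [Finset.mem_singleton] at h
            exact h ▸ Finset.mem_inter.mpr ⟨ha2, hb2⟩
        have := Finset.card_le_card h2
        rw [Finset.card_insert_of_notMem (by simp [hpne]), Finset.card_singleton] at this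
        omega
    _ = (e.erase w).card * (f.erase w).card := by
        rw [Finset.sum_const, Finset.card_product, smul_eq_mul, mul_one]

lemma aux_P {n : ℕ} {H : Finset (Finset (Fin n))}
    {e f : Finset (Fin n)} (he : e ∈ H) (hf : f ∈ H) (hef : e ≠ f)
    {w : Fin n} (hwe : w ∈ e) (hwf : w ∈ f) :
    ((CommonNbrs H e f).filter (fun g => w ∈ g)).card + 2 ≤
      (H.filter (fun g => w ∈ g)).card := by
  classical
  set P := (CommonNbrs H e f).filter (fun g => w ∈ g) with hP
  have heP : e ∉ P := by
    intro h
    exact ((Finset.mem_filter.mp ((Finset.mem_filter.mp h).1)).2).1 rfl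
  have hfP : f ∉ P := by
    intro h
    exact ((Finset.mem_filter.mp ((Finset.mem_filter.mp h).1)).2).2.2.1 rfl
  have hsub : insert e (insert f P) ⊆ H.filter (fun g => w ∈ g) := by
    intro g hg
    rcases Finset.mem_insert.mp hg with h | hg
    · exact h ▸ Finset.mem_filter.mpr ⟨he, hwe⟩
    rcases Finset.mem_insert.mp hg with h | hg
    · exact h ▸ Finset.mem_filter.mpr ⟨hf, hwf⟩
    · obtain ⟨hg', hwg⟩ := Finset.mem_filter.mp hg
      exact Finset.mem_filter.mpr ⟨(Finset.mem_filter.mp hg').1, hwg⟩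
  have hcard : (insert e (insert f P)).card = P.card + 2 := by
    rw [Finset.card_insert_of_notMem (by simp [heP, hef]),
      Finset.card_insert_of_notMem hfP]
  calc P.card + 2 = (insert e (insert f P)).card := hcard.symm
    _ ≤ _ := Finset.card_le_card hsub
/-- clean-context arithmetic for the `m ≤ 1/(3δ)` case -/
lemma arith3 (δ r K N M S T : ℝ)
    (hδ : 0 < δ) (hδ0 : δ ≤ 1/100)
    (hδr : 100 ≤ δ * r) (hrK1 : K - 1/2 ≤ r) (hrK2 : r ≤ K + 1) (hK : 9000 ≤ K)
    (hMnn : 0 ≤ M) (hSnn : 0 ≤ S) (hMle : M ≤ 1/(3*δ))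
    (h1 : M * ((1-δ)*r - 1) + S * (K - 1) ≤ N - 1)
    (hTr : T = N - (K-1)^2) (hTk : K + 1 ≤ T) :
    M + S < T + 1 := by
  have hδk : (99:ℝ) ≤ δ*K := by
    nlinarith [mul_nonneg hδ.le (by linarith : (0:ℝ) ≤ K + 1 - r)]
  have hco : (K-1) - ((1-δ)*r - 1) ≤ 2*δ*K := by
    nlinarith [mul_nonneg hδ.le (by linarith : (0:ℝ) ≤ K + 1 - r)]
  have hM2 : M * (2*δ*K) ≤ 2*K/3 := by
    have hKnn : (0:ℝ) ≤ K := by linarith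
    have h2 := mul_le_mul_of_nonneg_right hMle (by positivity : (0:ℝ) ≤ 2*δ*K)
    calc M * (2*δ*K) ≤ (1/(3*δ)) * (2*δ*K) := h2
      _ = 2*K/3 := by field_simp
  have hbig : (M + S) * (K-1) ≤ N - 1 + 2*K/3 := by
    nlinarith [mul_le_mul_of_nonneg_left hco hMnn]
  have hstrict : (M + S) * (K-1) < (T + 1) * (K-1) := by
    nlinarith [mul_nonneg (by linarith : (0:ℝ) ≤ T - (K+1))
      (by linarith : (0:ℝ) ≤ K-2)]
  exact lt_of_mul_lt_mul_right hstrict (by linarith)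


set_option maxHeartbeats 1000000 in
/-- For sufficiently small `δ` and large `n` with `(k-1)² + k + 1 ≤ n ≤ k² + k + 1`: in an
`n`-vertex linear hypergraph all of whose edges have size at least `(1-δ)√n`, for distinct
intersecting edges `e, f` of size at most `k` meeting in a vertex `w`, if `m` is the number of
edges of size at most `k-1` containing `w`, and either one of `e`, `f` has size at most `k-1`
or `m ≤ 1/(3δ)`, then `{e, f}` is a useful pair. -/
theorem useful_pair_criterion :
    ∃ δ0 : ℝ, 0 < δ0 ∧ δ0 < 1 ∧
      ∀ δ : ℝ, 0 < δ → δ ≤ δ0 →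
        ∃ n0 : ℕ, ∀ n : ℕ, n0 ≤ n →
          ∀ k : ℕ, 0 < k → (k - 1) ^ 2 + k + 1 ≤ n → n ≤ k ^ 2 + k + 1 →
            ∀ H : Finset (Finset (Fin n)), LinearHG H →
              (∀ e ∈ H, (1 - δ) * Real.sqrt n ≤ (e.card : ℝ)) →
              ∀ e ∈ H, ∀ f ∈ H, e ≠ f → (e ∩ f).Nonempty →
                e.card ≤ k → f.card ≤ k →
                ∀ w : Fin n, w ∈ e ∩ f →
                  ∀ m : ℕ, m = (H.filter fun g => w ∈ g ∧ g.card ≤ k - 1).card →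
                    (e.card ≤ k - 1 ∨ f.card ≤ k - 1 ∨ (m : ℝ) ≤ 1 / (3 * δ)) →
                    Useful H e f := by
  classical
  refine ⟨1/100, by norm_num, by norm_num, fun δ hδ hδ0 => ?_⟩
  refine ⟨⌈(100/δ)^2⌉₊, fun n hn k hk hnk1 hnk2 H hlin hsize e he f hf hef hint hek hfk
    w hw m hm hcase => ?_⟩
  refine ⟨hef, hint, ?_⟩
  have hwe : w ∈ e := (Finset.mem_inter.mp hw).1
  have hwf : w ∈ f := (Finset.mem_inter.mp hw).2
  have hk1 : 1 ≤ k := hk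
  have hkR : (1:ℝ) ≤ (k:ℝ) := Nat.one_le_cast.mpr hk1
  set r : ℝ := Real.sqrt n with hrdef
  have hr2 : r ^ 2 = (n : ℝ) := Real.sq_sqrt (Nat.cast_nonneg n)
  have hn0 : ((100/δ)^2 : ℝ) ≤ (n : ℝ) := by
    calc ((100/δ)^2 : ℝ) ≤ (⌈(100/δ)^2⌉₊ : ℝ) := Nat.le_ceil _
      _ ≤ (n : ℝ) := Nat.cast_le.mpr hn
  have h100δ : (100:ℝ)/δ ≤ r := by
    have := Real.sqrt_le_sqrt hn0
    rwa [Real.sqrt_sq (by positivity)] at this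
  have hδr : (100:ℝ) ≤ δ * r := by
    have := mul_le_mul_of_nonneg_left h100δ hδ.le
    rwa [mul_div_cancel₀ _ (ne_of_gt hδ)] at this
  have hN1 : ((k:ℝ)-1)^2 + k + 1 ≤ (n : ℝ) := by
    have hc : (((k-1)^2 + k + 1 : ℕ) : ℝ) ≤ (n : ℝ) := Nat.cast_le.mpr hnk1
    push_cast [Nat.cast_sub hk1] at hc
    linarith
  have hN2 : (n : ℝ) ≤ (k:ℝ)^2 + k + 1 := by
    have hc : ((n:ℕ) : ℝ) ≤ ((k^2 + k + 1 : ℕ) : ℝ) := Nat.cast_le.mpr hnk2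
    push_cast at hc
    linarith
  have hrK2 : r ≤ (k:ℝ) + 1 := by
    have h1 : (n:ℝ) ≤ ((k:ℝ)+1)^2 := by
      have he1 : ((k:ℝ)+1)^2 = (k:ℝ)^2 + 2*k + 1 := by ring
      linarith
    have := Real.sqrt_le_sqrt h1
    rwa [Real.sqrt_sq (by positivity)] at this
  have hrK1 : (k:ℝ) - 1/2 ≤ r := by
    rw [hrdef, Real.le_sqrt (by linarith) (Nat.cast_nonneg n)]
    have he1 : ((k:ℝ)-1/2)^2 = (k:ℝ)^2 - k + 1/4 := by ring
    have he2 : ((k:ℝ)-1)^2 = (k:ℝ)^2 - 2*k + 1 := by ring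
    linarith
  have hr10000 : (10000:ℝ) ≤ r := by
    have h4 : (10000:ℝ) ≤ 100/δ := by
      rw [le_div_iff₀ hδ]; linarith
    linarith
  have hK : (9000:ℝ) ≤ (k:ℝ) := by linarith
  have hr0 : (0:ℝ) < r := by linarith
  have hδrle : δ * r ≤ (1/100) * r := mul_le_mul_of_nonneg_right hδ0 hr0.le
  have hco2 : (1:ℝ) ≤ (1-δ)*r - 1 := by linarith
  set D := H.filter (fun g => w ∈ g) with hD
  have heD : e ∈ D := Finset.mem_filter.mpr ⟨he, hwe⟩
  have hfD : f ∈ D := Finset.mem_filter.mpr ⟨hf, hwf⟩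
  have hDsum : ∑ g ∈ D, ((g.card : ℝ) - 1) ≤ (n : ℝ) - 1 := aux_sum hlin w
  have hwef : e ∩ f = {w} := by
    refine Finset.eq_singleton_iff_unique_mem.mpr ⟨hw, fun x hx => ?_⟩
    exact Finset.card_le_one.mp (hlin e he f hf hef) x hx w hw
  set mcl := D.filter (fun g => g.card ≤ k-1) with hmcl
  set scl := D.filter (fun g => ¬ g.card ≤ k-1) with hscl
  have hsplitcard : mcl.card + scl.card = D.card :=
    Finset.card_filter_add_card_filter_not _
  have hm' : m = mcl.card := by
    rw [hm, hmcl, hD, Finset.filter_filter]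
  have hsum_split : ∑ g ∈ mcl, ((g.card : ℝ) - 1) + ∑ g ∈ scl, ((g.card : ℝ) - 1)
      = ∑ g ∈ D, ((g.card : ℝ) - 1) :=
    Finset.sum_filter_add_sum_filter_not D _ _
  have hml : (mcl.card : ℝ) * ((1-δ)*r - 1) ≤ ∑ g ∈ mcl, ((g.card : ℝ) - 1) := by
    rw [← nsmul_eq_mul]
    refine Finset.card_nsmul_le_sum _ _ _ fun g hg => ?_
    have hgH : g ∈ H := (Finset.mem_filter.mp ((Finset.mem_filter.mp hg).1)).1
    have := hsize g hgH
    linarith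
  have hsl : (scl.card : ℝ) * ((k:ℝ) - 1) ≤ ∑ g ∈ scl, ((g.card : ℝ) - 1) := by
    rw [← nsmul_eq_mul]
    refine Finset.card_nsmul_le_sum _ _ _ fun g hg => ?_
    have hgk : k ≤ g.card := by
      have := (Finset.mem_filter.mp hg).2
      omega
    have : (k:ℝ) ≤ (g.card : ℝ) := Nat.cast_le.mpr hgk
    linarith
  have h1 : (mcl.card : ℝ) * ((1-δ)*r - 1) + (scl.card : ℝ) * ((k:ℝ) - 1)
      ≤ (n : ℝ) - 1 := by linarith
  have hQ := aux_Q hlin (e := e) (f := f) hwef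
  have hP := aux_P he hf hef hwe hwf
  have hCNsplit : ((CommonNbrs H e f).filter (fun g => w ∈ g)).card
      + ((CommonNbrs H e f).filter (fun g => w ∉ g)).card = (CommonNbrs H e f).card :=
    Finset.card_filter_add_card_filter_not _
  have he1 : 1 ≤ e.card := Finset.card_pos.mpr ⟨w, hwe⟩
  have hf1 : 1 ≤ f.card := Finset.card_pos.mpr ⟨w, hwf⟩
  have heE : ((e.erase w).card : ℝ) = (e.card : ℝ) - 1 := by
    rw [Finset.card_erase_of_mem hwe]
    push_cast [Nat.cast_sub he1]
    ring
  have hfE : ((f.erase w).card : ℝ) = (f.card : ℝ) - 1 := by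
    rw [Finset.card_erase_of_mem hwf]
    push_cast [Nat.cast_sub hf1]
    ring
  have hQr : (((CommonNbrs H e f).filter (fun g => w ∉ g)).card : ℝ)
      ≤ ((e.card : ℝ) - 1) * ((f.card : ℝ) - 1) := by
    rw [← heE, ← hfE]
    exact_mod_cast hQ
  have hPr : (((CommonNbrs H e f).filter (fun g => w ∈ g)).card : ℝ)
      ≤ (D.card : ℝ) - 2 := by
    have : (((CommonNbrs H e f).filter (fun g => w ∈ g)).card : ℝ) + 2 ≤ (D.card : ℝ) := by
      exact_mod_cast hP
    linarith
  have hCNr : ((CommonNbrs H e f).card : ℝ)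
      ≤ ((e.card : ℝ) - 1) * ((f.card : ℝ) - 1) + ((D.card : ℝ) - 2) := by
    have hc : (((CommonNbrs H e f).filter (fun g => w ∈ g)).card : ℝ)
        + (((CommonNbrs H e f).filter (fun g => w ∉ g)).card : ℝ)
        = ((CommonNbrs H e f).card : ℝ) := by exact_mod_cast hCNsplit
    linarith
  have hE1 : (1:ℝ) ≤ (e.card : ℝ) := Nat.one_le_cast.mpr he1
  have hF1 : (1:ℝ) ≤ (f.card : ℝ) := Nat.one_le_cast.mpr hf1
  have hEk : (e.card : ℝ) ≤ (k:ℝ) := Nat.cast_le.mpr hek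
  have hFk : (f.card : ℝ) ≤ (k:ℝ) := Nat.cast_le.mpr hfk
  have hmain : ((CommonNbrs H e f).card : ℝ) ≤ (n : ℝ) - 2 := by
    have hDnn : (0:ℝ) ≤ (D.card : ℝ) := Nat.cast_nonneg _
    have hdl : (D.card : ℝ) * ((1-δ)*r - 1) ≤ (n : ℝ) - 1 := by
      have : (D.card : ℝ) * ((1-δ)*r - 1) ≤ ∑ g ∈ D, ((g.card : ℝ) - 1) := by
        rw [← nsmul_eq_mul]
        refine Finset.card_nsmul_le_sum _ _ _ fun g hg => ?_
        have hgH : g ∈ H := (Finset.mem_filter.mp hg).1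
        have := hsize g hgH
        linarith
      linarith
    have hd2k : (D.card : ℝ) ≤ 2*(k:ℝ) := by
      have hco : (49:ℝ)/50 * r ≤ (1-δ)*r - 1 := by linarith
      have hstep : (D.card : ℝ) * ((49:ℝ)/50 * r) ≤ r^2 := by
        have h5 := mul_le_mul_of_nonneg_left hco hDnn
        have h6 : (1:ℝ)*1 ≤ r*r := mul_le_mul (by linarith) (by linarith)
          (by norm_num) (by linarith)
        have h6' : (1:ℝ) ≤ r^2 := by rw [sq]; linarith
        have h7 : (D.card : ℝ) * ((1-δ)*r - 1) ≤ r^2 - 1 := by rw [hr2]; linarith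
        linarith
      have hd' : (D.card : ℝ) ≤ 50/49 * r := by
        have hpos : (0:ℝ) < 49/50*r := by positivity
        rw [← mul_le_mul_iff_of_pos_right hpos]
        calc (D.card:ℝ) * (49/50*r) ≤ r^2 := hstep
          _ = 50/49*r*(49/50*r) := by ring
      linarith
    have hq : ((k:ℝ)-2)*((k:ℝ)-1) + 2*(k:ℝ) = ((k:ℝ)-1)^2 + k + 1 := by ring
    rcases hcase with hc1 | hc1 | hc1
    · have hEk' : (e.card : ℝ) ≤ (k:ℝ) - 1 := by
        have : ((e.card : ℕ) : ℝ) ≤ ((k - 1 : ℕ) : ℝ) := Nat.cast_le.mpr hc1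
        rwa [Nat.cast_sub hk1, Nat.cast_one] at this
      have hprod : ((e.card : ℝ) - 1) * ((f.card : ℝ) - 1) ≤ ((k:ℝ)-2)*((k:ℝ)-1) :=
        mul_le_mul (by linarith) (by linarith) (by linarith) (by linarith)
      linarith
    · have hFk' : (f.card : ℝ) ≤ (k:ℝ) - 1 := by
        have : ((f.card : ℕ) : ℝ) ≤ ((k - 1 : ℕ) : ℝ) := Nat.cast_le.mpr hc1
        rwa [Nat.cast_sub hk1, Nat.cast_one] at this
      have hprod : ((e.card : ℝ) - 1) * ((f.card : ℝ) - 1) ≤ ((k:ℝ)-2)*((k:ℝ)-1) := by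
        have h8 : ((e.card : ℝ) - 1) * ((f.card : ℝ) - 1) ≤ ((k:ℝ)-1)*((k:ℝ)-2) :=
          mul_le_mul (by linarith) (by linarith) (by linarith) (by linarith)
        calc ((e.card : ℝ) - 1) * ((f.card : ℝ) - 1) ≤ ((k:ℝ)-1)*((k:ℝ)-2) := h8
          _ = ((k:ℝ)-2)*((k:ℝ)-1) := by ring
      linarith
    · have hprod : ((e.card : ℝ) - 1) * ((f.card : ℝ) - 1) ≤ ((k:ℝ)-1)^2 := by
        have h8 : ((e.card : ℝ) - 1) * ((f.card : ℝ) - 1) ≤ ((k:ℝ)-1)*((k:ℝ)-1) :=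
          mul_le_mul (by linarith) (by linarith) (by linarith) (by linarith)
        calc ((e.card : ℝ) - 1) * ((f.card : ℝ) - 1) ≤ ((k:ℝ)-1)*((k:ℝ)-1) := h8
          _ = ((k:ℝ)-1)^2 := by ring
      have hkn : (k-1)^2 ≤ n := by omega
      set T : ℕ := n - (k-1)^2 with hT
      have hTr : (T : ℝ) = (n : ℝ) - ((k:ℝ)-1)^2 := by
        rw [hT, Nat.cast_sub hkn]
        push_cast [Nat.cast_sub hk1]
        ring
      have hTk : (k:ℝ) + 1 ≤ (T:ℝ) := by rw [hTr]; linarith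
      have hDT : D.card ≤ T := by
        have hMnn : (0:ℝ) ≤ (mcl.card : ℝ) := Nat.cast_nonneg _
        have hSnn : (0:ℝ) ≤ (scl.card : ℝ) := Nat.cast_nonneg _
        have hMle : (mcl.card : ℝ) ≤ 1/(3*δ) := hm' ▸ hc1
        have hlt : ((mcl.card : ℝ) + (scl.card : ℝ)) < (T:ℝ) + 1 :=
          arith3 δ r (k:ℝ) (n:ℝ) (mcl.card:ℝ) (scl.card:ℝ) (T:ℝ)
            hδ hδ0 hδr hrK1 hrK2 hK hMnn hSnn hMle h1 hTr hTk
        have hltn : mcl.card + scl.card < T + 1 := by exact_mod_cast hlt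
        omega
      have hDTr : (D.card : ℝ) ≤ (T:ℝ) := Nat.cast_le.mpr hDT
      rw [hTr] at hDTr
      linarith
  exact_mod_cast hmain
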